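/- Let ℓ₂ be the complex Hilbert space of square-summable complex sequences, let g₀ ∈ ℓ₂ with ‖g₀‖ = 1, and let ε ∈ (0,1). Suppose there exists a bounded linear operator T on ℓ₂ satisfying (P3): for every non-zero x ∈ ℓ₂ the distance of the orbit Orb(x,T) to g₀ is less than ε, i.e. inf_{n∈ℕ} ‖T^n x − g₀‖ < ε. Then there exists a bounded linear operator T' on ℓ₂ which has no non-trivial invariant closed subspace, i.e. every non-zero vector of ℓ₂ is cyclic for T'. -/

import Mathlib

/-- The complex Hilbert space `ℓ₂` of square-summable complex sequences. -/
abbrev ellTwo : Type := lp (fun _ : ℕ => ℂ) 2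

section Aux

open Metric Submodule Set Filter Topology

/-- A "good" subspace: non-trivial, closed and `T`-invariant. -/
private def IsGood (T : ellTwo →L[ℂ] ellTwo) (K : Submodule ℂ ellTwo) : Prop :=
  K ≠ ⊥ ∧ IsClosed (K : Set ellTwo) ∧ ∀ x ∈ K, T x ∈ K

private lemma pow_apply_succ (T : ellTwo →L[ℂ] ellTwo) (n : ℕ) (x : ellTwo) :
    (T ^ (n + 1)) x = T ((T ^ n) x) := by
  rw [pow_succ', ContinuousLinearMap.mul_apply]

private lemma clm_pow_apply_succ {E : Type*} [NormedAddCommGroup E] [NormedSpace ℂ E]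
    (S : E →L[ℂ] E) (n : ℕ) (x : E) : (S ^ (n + 1)) x = S ((S ^ n) x) := by
  rw [pow_succ', ContinuousLinearMap.mul_apply]

private lemma pow_apply_mem {T : ellTwo →L[ℂ] ellTwo} {K : Submodule ℂ ellTwo}
    (hKi : ∀ x ∈ K, T x ∈ K) : ∀ (n : ℕ), ∀ x ∈ K, (T ^ n) x ∈ K := by
  intro n
  induction n with
  | zero => intro x hx; simpa using hx
  | succ n ih =>
      intro x hx
      rw [pow_apply_succ]
      exact hKi _ (ih x hx)

private lemma close_of_good {T : ellTwo →L[ℂ] ellTwo} {g₀ : ellTwo} {ε : ℝ}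
    (hP3 : ∀ x : ellTwo, x ≠ 0 →
      Metric.infDist g₀ (Set.range fun n : ℕ => (T ^ n) x) < ε)
    {K : Submodule ℂ ellTwo} (hKb : K ≠ ⊥) (hKi : ∀ x ∈ K, T x ∈ K) :
    ∃ y ∈ K, dist g₀ y < ε := by
  obtain ⟨x, hxK, hx0⟩ := (Submodule.ne_bot_iff K).mp hKb
  have h := hP3 x hx0
  rw [Metric.infDist_lt_iff (Set.range_nonempty _)] at h
  obtain ⟨y, ⟨n, rfl⟩, hy⟩ := h
  exact ⟨_, pow_apply_mem hKi n x hxK, hy⟩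

private lemma est {a b c d u : ℝ} (hd0 : 0 ≤ d) (hd1 : d ≤ 1) (hu : 0 < u) (hu1 : u ≤ 1)
    (ha : 0 ≤ a) (ha' : a ≤ d + u) (hb : 0 ≤ b) (hb' : b ≤ d + u) (hc : 0 ≤ c)
    (hc' : d - u ≤ c) :
    2*a^2 + 2*b^2 - 4*c^2 ≤ 16*u := by
  rcases le_or_gt u d with h | h
  · nlinarith [sq_nonneg (d-u), sq_nonneg (a-b)]
  · nlinarith [sq_nonneg (a-b), sq_nonneg c]

private lemma para (g z w : ellTwo) :
    ‖z - w‖^2 = 2*‖g - z‖^2 + 2*‖g - w‖^2 - 4*‖g - (2:ℂ)⁻¹ • (z + w)‖^2 := by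
  have h := parallelogram_law_with_norm ℂ (g - z) (g - w)
  have h1 : g - z + (g - w) = (2:ℂ) • (g - (2:ℂ)⁻¹ • (z + w)) := by
    rw [smul_sub, smul_inv_smul₀ (two_ne_zero), two_smul]; abel
  have h2 : g - z - (g - w) = w - z := by abel
  have h2n : ‖(2:ℂ)‖ = 2 := by norm_num
  rw [h1, h2, norm_smul, h2n, norm_sub_rev w z] at h
  nlinarith [h]

/-- The intersection of a non-empty chain of good subspaces is still non-trivial. -/
private lemma sInf_chain_ne_bot
    {T : ellTwo →L[ℂ] ellTwo} {g₀ : ellTwo} (hg₀ : ‖g₀‖ = 1) {ε : ℝ}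
    (hε0 : 0 < ε) (hε1 : ε < 1)
    (hP3 : ∀ x : ellTwo, x ≠ 0 →
      Metric.infDist g₀ (Set.range fun n : ℕ => (T ^ n) x) < ε)
    {c : Set (Submodule ℂ ellTwo)} (hsub : ∀ K ∈ c, IsGood T K)
    (hchain : IsChain (· ≤ ·) c) (hne : c.Nonempty) :
    sInf c ≠ ⊥ := by
  classical
  set A : Set ℝ := (fun K : Submodule ℂ ellTwo => infDist g₀ (K : Set ellTwo)) '' c with hA
  have hAne : A.Nonempty := hne.image _
  have hAub : ∀ a ∈ A, a ≤ ε := by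
    rintro a ⟨K, hK, rfl⟩
    obtain ⟨y, hyK, hy⟩ := close_of_good hP3 (hsub K hK).1 (hsub K hK).2.2
    exact (infDist_le_dist_of_mem hyK).trans hy.le
  have hbdd : BddAbove A := ⟨ε, hAub⟩
  set d : ℝ := sSup A with hd
  have hd_le : d ≤ ε := Real.sSup_le hAub hε0.le
  have hd0 : 0 ≤ d := by
    obtain ⟨a, ha⟩ := hAne
    refine le_trans ?_ (le_csSup hbdd ha)
    obtain ⟨K, hK, rfl⟩ := ha
    exact infDist_nonneg
  have hd1 : d ≤ 1 := hd_le.trans hε1.le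
  set u : ℕ → ℝ := fun k => 1 / (k + 1) with hu
  have hu0 : ∀ k, 0 < u k := fun k => by positivity
  have hu1 : ∀ k, u k ≤ 1 := by
    intro k
    rw [hu]
    have : (1:ℝ) ≤ (k:ℝ) + 1 := by exact_mod_cast Nat.one_le_iff_ne_zero.mpr (Nat.succ_ne_zero k)
    simpa using div_le_one_of_le₀ this (by positivity)
  have huanti : ∀ {j k : ℕ}, j ≤ k → u k ≤ u j := by
    intro j k hjk
    apply one_div_le_one_div_of_le (by positivity)
    have : (j:ℝ) ≤ (k:ℝ) := by exact_mod_cast hjk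
    linarith
  -- choose a chain element almost realizing the sup
  have hKex : ∀ k : ℕ, ∃ K, K ∈ c ∧ d - u k < infDist g₀ (K : Set ellTwo) := by
    intro k
    have : d - u k < sSup A := by
      have := hu0 k
      linarith
    obtain ⟨a, haA, hlt⟩ := exists_lt_of_lt_csSup hAne this
    obtain ⟨K, hK, rfl⟩ := haA
    exact ⟨K, hK, hlt⟩
  choose K hKc hKd using hKex
  have hKinfle : ∀ K', K' ∈ c → infDist g₀ (K' : Set ellTwo) ≤ d :=
    fun K' hK' => le_csSup hbdd ⟨K', hK', rfl⟩
  have hyex : ∀ k : ℕ, ∃ y ∈ (K k : Set ellTwo), dist g₀ y < d + u k := by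
    intro k
    apply (Metric.infDist_lt_iff ⟨0, (K k).zero_mem⟩).mp
    have := hu0 k
    have := hKinfle (K k) (hKc k)
    linarith
  choose y hyK hyd using hyex
  -- the key quantitative estimate
  have hdist : ∀ j k : ℕ, dist (y j) (y k) ^ 2 ≤ 16 * u (min j k) := by
    intro j k
    -- find a common chain element containing both points
    obtain ⟨KK, hKKc, hyjKK, hykKK, hKKd⟩ :
        ∃ KK, KK ∈ c ∧ y j ∈ KK ∧ y k ∈ KK ∧
          d - u (min j k) < infDist g₀ (KK : Set ellTwo) := by
      rcases eq_or_ne (K j) (K k) with h | h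
      · refine ⟨K j, hKc j, hyK j, h ▸ hyK k, lt_of_le_of_lt ?_ (hKd j)⟩
        have := huanti (min_le_left j k)
        linarith
      · rcases hchain (hKc j) (hKc k) h with hle | hle
        · refine ⟨K k, hKc k, hle (hyK j), hyK k, lt_of_le_of_lt ?_ (hKd k)⟩
          have := huanti (min_le_right j k)
          linarith
        · refine ⟨K j, hKc j, hyK j, hle (hyK k), lt_of_le_of_lt ?_ (hKd j)⟩
          have := huanti (min_le_left j k)
          linarith
    have hmid : (2:ℂ)⁻¹ • (y j + y k) ∈ KK := KK.smul_mem _ (KK.add_mem hyjKK hykKK)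
    have hmid' : d - u (min j k) ≤ dist g₀ ((2:ℂ)⁻¹ • (y j + y k)) :=
      le_trans hKKd.le (infDist_le_dist_of_mem hmid)
    have hpar := para g₀ (y j) (y k)
    have hyj : dist g₀ (y j) ≤ d + u (min j k) := by
      have := huanti (min_le_left j k)
      have := hyd j
      linarith
    have hyk : dist g₀ (y k) ≤ d + u (min j k) := by
      have := huanti (min_le_right j k)
      have := hyd k
      linarith
    have heq : dist (y j) (y k) ^ 2 =
        2*(dist g₀ (y j))^2 + 2*(dist g₀ (y k))^2
          - 4*(dist g₀ ((2:ℂ)⁻¹ • (y j + y k)))^2 := by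
      simp only [dist_eq_norm]
      exact hpar
    rw [heq]
    exact est hd0 hd1 (hu0 _) (hu1 _) dist_nonneg hyj dist_nonneg hyk dist_nonneg hmid'
  -- Cauchy sequence
  have hcauchy : CauchySeq y := by
    rw [Metric.cauchySeq_iff']
    intro δ hδ
    obtain ⟨N, hN⟩ := exists_nat_gt (16 / δ ^ 2)
    refine ⟨N, fun n hn => ?_⟩
    have hmin : min n N = N := min_eq_right hn
    have h1 : dist (y n) (y N) ^ 2 ≤ 16 * u N := by
      have := hdist n N
      rwa [hmin] at this
    have h2 : 16 * u N < δ ^ 2 := by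
      rw [hu]
      have hN1 : (0:ℝ) < (N:ℝ) + 1 := by positivity
      rw [div_lt_iff₀ (by positivity : (0:ℝ) < δ ^ 2)] at hN
      have : 16 < δ ^ 2 * ((N:ℝ) + 1) := by nlinarith
      rw [mul_one_div, div_lt_iff₀ hN1]
      linarith
    have := h1.trans_lt h2
    exact lt_of_pow_lt_pow_left₀ 2 hδ.le this
  obtain ⟨m, hm⟩ := cauchySeq_tendsto_of_complete hcauchy
  -- the limit belongs to every element of the chain
  have hmem : ∀ K' ∈ c, m ∈ K' := by
    intro K' hK'c
    have hKcl : IsClosed (K' : Set ellTwo) := (hsub K' hK'c).2.1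
    have hKne : (K' : Set ellTwo).Nonempty := ⟨0, K'.zero_mem⟩
    have key : ∀ k : ℕ, infDist m (K' : Set ellTwo) ≤ dist m (y k) + 4 * Real.sqrt (u k) := by
      intro k
      have hcomp : K k ≤ K' ∨ K' ≤ K k := by
        rcases eq_or_ne (K k) K' with h | h
        · exact Or.inl h.le
        · exact hchain (hKc k) hK'c h
      rcases hcomp with hle | hle
      · have h1 : infDist m (K' : Set ellTwo) ≤ dist m (y k) :=
          infDist_le_dist_of_mem (x := m) (hle (hyK k))
        have h2 : (0:ℝ) ≤ Real.sqrt (u k) := Real.sqrt_nonneg _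
        linarith
      · obtain ⟨z, hzK', hz⟩ : ∃ z ∈ (K' : Set ellTwo), dist g₀ z < d + u k := by
          apply (Metric.infDist_lt_iff hKne).mp
          have := hu0 k
          have := hKinfle K' hK'c
          linarith
        have hzKk : z ∈ K k := hle hzK'
        have hmid : (2:ℂ)⁻¹ • (z + y k) ∈ K k :=
          (K k).smul_mem _ ((K k).add_mem hzKk (hyK k))
        have hmid' : d - u k ≤ dist g₀ ((2:ℂ)⁻¹ • (z + y k)) :=
          le_trans (hKd k).le (infDist_le_dist_of_mem hmid)
        have heq : dist z (y k) ^ 2 =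
            2*(dist g₀ z)^2 + 2*(dist g₀ (y k))^2
              - 4*(dist g₀ ((2:ℂ)⁻¹ • (z + y k)))^2 := by
          simp only [dist_eq_norm]
          exact para g₀ z (y k)
        have hsq : dist z (y k) ^ 2 ≤ 16 * u k := by
          rw [heq]
          exact est hd0 hd1 (hu0 _) (hu1 _) dist_nonneg (hz.le) dist_nonneg (hyd k).le
            dist_nonneg hmid'
        have hzyk : dist z (y k) ≤ 4 * Real.sqrt (u k) := by
          have h4 : (4:ℝ) * Real.sqrt (u k) = Real.sqrt (16 * u k) := by
            rw [show (16:ℝ) * u k = 4^2 * u k by norm_num, Real.sqrt_mul (by positivity) (u k),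
              Real.sqrt_sq (by norm_num : (0:ℝ) ≤ 4)]
          rw [h4]
          exact (Real.le_sqrt dist_nonneg (by positivity)).mpr hsq
        calc infDist m (K' : Set ellTwo) ≤ dist m z := infDist_le_dist_of_mem hzK'
          _ ≤ dist m (y k) + dist (y k) z := dist_triangle _ _ _
          _ = dist m (y k) + dist z (y k) := by rw [dist_comm (y k) z]
          _ ≤ dist m (y k) + 4 * Real.sqrt (u k) := by linarith
    have hlim : Tendsto (fun k => dist m (y k) + 4 * Real.sqrt (u k)) atTop (𝓝 0) := by
      have h1 : Tendsto (fun k => dist m (y k)) atTop (𝓝 0) := by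
        have := (tendsto_const_nhds : Tendsto (fun _ : ℕ => m) atTop (𝓝 m)).dist hm
        simpa using this
      have h2 : Tendsto (fun k : ℕ => u k) atTop (𝓝 0) := by
        rw [hu]
        exact tendsto_one_div_add_atTop_nhds_zero_nat
      have h3 : Tendsto (fun k : ℕ => Real.sqrt (u k)) atTop (𝓝 0) := by
        have := (Real.continuous_sqrt.tendsto 0).comp h2
        simpa [Function.comp_def] using this
      have := h1.add (h3.const_mul 4)
      simpa using this
    have h0 : infDist m (K' : Set ellTwo) ≤ 0 :=
      ge_of_tendsto hlim (Filter.Eventually.of_forall key)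
    have : infDist m (K' : Set ellTwo) = 0 := le_antisymm h0 infDist_nonneg
    exact (hKcl.mem_iff_infDist_zero hKne).mpr this
  -- the limit is non-zero
  have hgm : dist g₀ m ≤ d := by
    have h1 : Tendsto (fun k => dist g₀ (y k)) atTop (𝓝 (dist g₀ m)) :=
      (tendsto_const_nhds : Tendsto (fun _ : ℕ => g₀) atTop (𝓝 g₀)).dist hm
    have h2 : Tendsto (fun k => d + u k) atTop (𝓝 d) := by
      have h2' : Tendsto (fun k : ℕ => u k) atTop (𝓝 0) := by
        rw [hu]; exact tendsto_one_div_add_atTop_nhds_zero_nat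
      have := (tendsto_const_nhds : Tendsto (fun _ : ℕ => d) atTop (𝓝 d)).add h2'
      simpa using this
    exact le_of_tendsto_of_tendsto' h1 h2 (fun k => (hyd k).le)
  have hm0 : m ≠ 0 := by
    intro h
    rw [h, dist_zero_right, hg₀] at hgm
    linarith
  exact (Submodule.ne_bot_iff _).mpr ⟨m, Submodule.mem_sInf.mpr hmem, hm0⟩

private lemma exists_minimal_good
    {T : ellTwo →L[ℂ] ellTwo} {g₀ : ellTwo} (hg₀ : ‖g₀‖ = 1) {ε : ℝ}
    (hε0 : 0 < ε) (hε1 : ε < 1)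
    (hP3 : ∀ x : ellTwo, x ≠ 0 →
      Metric.infDist g₀ (Set.range fun n : ℕ => (T ^ n) x) < ε) :
    ∃ M : Submodule ℂ ellTwo, IsGood T M ∧ ∀ K, IsGood T K → K ≤ M → K = M := by
  have hnt : (⊤ : Submodule ℂ ellTwo) ≠ ⊥ := by
    intro h
    have hg : g₀ ∈ (⊥ : Submodule ℂ ellTwo) := h ▸ Submodule.mem_top
    rw [Submodule.mem_bot] at hg
    rw [hg] at hg₀
    simp at hg₀
  have htop : IsGood T ⊤ := ⟨hnt, isClosed_univ, fun x _ => Submodule.mem_top⟩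
  have hub : ∀ c ⊆ {K : (Submodule ℂ ellTwo)ᵒᵈ | IsGood T (OrderDual.ofDual K)},
      IsChain (· ≤ ·) c → ∀ z ∈ c,
        ∃ ub ∈ {K : (Submodule ℂ ellTwo)ᵒᵈ | IsGood T (OrderDual.ofDual K)},
          ∀ w ∈ c, w ≤ ub := by
    intro c hc hchain z hzc
    set cc : Set (Submodule ℂ ellTwo) := OrderDual.ofDual '' c with hcc
    have hccsub : ∀ K ∈ cc, IsGood T K := by
      rintro K ⟨K', hK', rfl⟩
      exact hc hK'
    have hccchain : IsChain (· ≤ ·) cc := by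
      rintro a ⟨a', ha', rfl⟩ b ⟨b', hb', rfl⟩ hab
      rcases hchain ha' hb' (fun h => hab (congrArg OrderDual.ofDual h)) with h | h
      · exact Or.inr h
      · exact Or.inl h
    have hccne : cc.Nonempty := ⟨OrderDual.ofDual z, z, hzc, rfl⟩
    refine ⟨OrderDual.toDual (sInf cc), ?_, ?_⟩
    · show IsGood T (sInf cc)
      refine ⟨sInf_chain_ne_bot hg₀ hε0 hε1 hP3 hccsub hccchain hccne, ?_, ?_⟩
      · have : ((sInf cc : Submodule ℂ ellTwo) : Set ellTwo) = ⋂ K ∈ cc, (K : Set ellTwo) :=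
          Submodule.coe_sInf cc
        rw [this]
        exact isClosed_biInter (fun K hK => (hccsub K hK).2.1)
      · intro x hx
        rw [Submodule.mem_sInf] at hx ⊢
        intro K hK
        exact (hccsub K hK).2.2 x (hx K hK)
    · intro K hK
      show sInf cc ≤ OrderDual.ofDual K
      exact sInf_le ⟨K, hK, rfl⟩
  obtain ⟨M, -, hM⟩ := zorn_le_nonempty₀ (α := (Submodule ℂ ellTwo)ᵒᵈ)
    {K | IsGood T (OrderDual.ofDual K)} hub (OrderDual.toDual ⊤) htop
  refine ⟨OrderDual.ofDual M, hM.1, fun K hK hKM => ?_⟩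
  exact le_antisymm hKM (hM.2 hK hKM)

private lemma no_eigenvector
    {T : ellTwo →L[ℂ] ellTwo} {g₀ : ellTwo} (hg₀ : ‖g₀‖ = 1) {ε : ℝ}
    (hε0 : 0 < ε) (hε1 : ε < 1)
    (hP3 : ∀ x : ellTwo, x ≠ 0 →
      Metric.infDist g₀ (Set.range fun n : ℕ => (T ^ n) x) < ε)
    {v : ellTwo} (hv : v ≠ 0) {lam : ℂ} (hev : T v = lam • v) : False := by
  have hpow : ∀ (n : ℕ) (cz : ℂ), (T ^ n) (cz • v) = (cz * lam ^ n) • v := by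
    intro n
    induction n with
    | zero => intro cz; simp
    | succ n ih =>
        intro cz
        rw [pow_apply_succ, ih, map_smul, hev, smul_smul]
        congr 1
        ring
  have hvn : (0:ℝ) < ‖v‖ := norm_pos_iff.mpr hv
  rcases le_or_gt ‖lam‖ 1 with hl | hl
  · set cr : ℝ := (1 - ε) / (2 * ‖v‖) with hcr
    have hcrpos : 0 < cr := div_pos (by linarith) (by positivity)
    set cz : ℂ := (cr : ℂ) with hcz
    have hcz0 : cz ≠ 0 := by
      rw [hcz]
      exact_mod_cast Complex.ofReal_ne_zero.mpr hcrpos.ne'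
    have hx := hP3 (cz • v) (smul_ne_zero hcz0 hv)
    rw [Metric.infDist_lt_iff (Set.range_nonempty _)] at hx
    obtain ⟨w, ⟨n, rfl⟩, hn⟩ := hx
    have hnorm : ‖(T ^ n) (cz • v)‖ ≤ (1 - ε) / 2 := by
      rw [hpow, norm_smul, norm_mul, norm_pow]
      have h1 : ‖cz‖ = cr := by
        rw [hcz, Complex.norm_real, Real.norm_eq_abs, abs_of_pos hcrpos]
      have h2 : ‖lam‖ ^ n ≤ 1 := pow_le_one₀ (norm_nonneg _) hl
      calc ‖cz‖ * ‖lam‖ ^ n * ‖v‖ ≤ ‖cz‖ * 1 * ‖v‖ := by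
            apply mul_le_mul_of_nonneg_right _ (norm_nonneg v)
            exact mul_le_mul_of_nonneg_left h2 (norm_nonneg cz)
        _ = cr * ‖v‖ := by rw [h1]; ring
        _ = (1 - ε) / 2 := by rw [hcr]; field_simp
    have hge : (1 + ε) / 2 ≤ dist g₀ ((T ^ n) (cz • v)) := by
      rw [dist_eq_norm]
      have h3 := norm_sub_norm_le g₀ ((T ^ n) (cz • v))
      rw [hg₀] at h3
      linarith
    linarith
  · set cr : ℝ := 2 / ‖v‖ with hcr
    have hcrpos : 0 < cr := div_pos (by norm_num) hvn
    set cz : ℂ := (cr : ℂ) with hcz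
    have hcz0 : cz ≠ 0 := by
      rw [hcz]
      exact_mod_cast Complex.ofReal_ne_zero.mpr hcrpos.ne'
    have hx := hP3 (cz • v) (smul_ne_zero hcz0 hv)
    rw [Metric.infDist_lt_iff (Set.range_nonempty _)] at hx
    obtain ⟨w, ⟨n, rfl⟩, hn⟩ := hx
    have hnorm : (2:ℝ) ≤ ‖(T ^ n) (cz • v)‖ := by
      rw [hpow, norm_smul, norm_mul, norm_pow]
      have h1 : ‖cz‖ = cr := by
        rw [hcz, Complex.norm_real, Real.norm_eq_abs, abs_of_pos hcrpos]
      have h2 : (1:ℝ) ≤ ‖lam‖ ^ n := one_le_pow₀ hl.le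
      calc (2:ℝ) = cr * 1 * ‖v‖ := by rw [hcr]; field_simp
        _ ≤ cr * ‖lam‖ ^ n * ‖v‖ := by
            apply mul_le_mul_of_nonneg_right _ (norm_nonneg v)
            exact mul_le_mul_of_nonneg_left h2 hcrpos.le
        _ = ‖cz‖ * ‖lam‖ ^ n * ‖v‖ := by rw [h1]
    have hge : (1:ℝ) ≤ dist g₀ ((T ^ n) (cz • v)) := by
      rw [dist_eq_norm, ← norm_sub_rev]
      have h3 := norm_sub_norm_le ((T ^ n) (cz • v)) g₀
      rw [hg₀] at h3
      linarith
    linarith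

private lemma not_finiteDimensional_good
    {T : ellTwo →L[ℂ] ellTwo} {g₀ : ellTwo} (hg₀ : ‖g₀‖ = 1) {ε : ℝ}
    (hε0 : 0 < ε) (hε1 : ε < 1)
    (hP3 : ∀ x : ellTwo, x ≠ 0 →
      Metric.infDist g₀ (Set.range fun n : ℕ => (T ^ n) x) < ε)
    {M : Submodule ℂ ellTwo} (hM : IsGood T M) :
    ¬ FiniteDimensional ℂ ↥M := by
  intro hfd
  haveI : Nontrivial ↥M := Submodule.nontrivial_iff_ne_bot.mpr hM.1
  set f : Module.End ℂ ↥M :=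
    LinearMap.restrict (T : ellTwo →ₗ[ℂ] ellTwo) (fun x hx => hM.2.2 x hx) with hf
  obtain ⟨μ, hμ⟩ := Module.End.exists_eigenvalue f
  obtain ⟨w, hw⟩ := hμ.exists_hasEigenvector
  have hw0 : (w : ellTwo) ≠ 0 := fun h => hw.2 (Submodule.coe_eq_zero.mp h)
  have hev : T (w : ellTwo) = μ • (w : ellTwo) := by
    have h1 : f w = μ • w := hw.apply_eq_smul
    have h2 : ((f w : ↥M) : ellTwo) = T (w : ellTwo) := by
      rw [hf, LinearMap.restrict_apply]
      rfl
    rw [h1] at h2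
    rw [← h2]
    rfl
  exact no_eigenvector hg₀ hε0 hε1 hP3 hw0 hev

set_option maxHeartbeats 1000000 in
private lemma iso_ellTwo (M : Submodule ℂ ellTwo) [CompleteSpace ↥M]
    (hnfd : ¬ FiniteDimensional ℂ ↥M) : Nonempty (↥M ≃ₗᵢ[ℂ] ellTwo) := by
  classical
  obtain ⟨w, b, -⟩ := exists_hilbertBasis ℂ ↥M
  -- the coercion of the basis vectors to `ellTwo` form an orthonormal family
  set v : w → ellTwo := fun i => ((b i : ↥M) : ellTwo) with hvdef
  have hv : Orthonormal ℂ v := by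
    rw [orthonormal_iff_ite]
    intro i j
    have := (orthonormal_iff_ite.mp b.orthonormal) i j
    rw [hvdef]
    simp only [← Submodule.coe_inner]
    exact this
  -- the closure of the span of the basis is everything
  have hdense : (Submodule.span ℂ (Set.range fun i => b i)).topologicalClosure = ⊤ := by
    have h := b.dense_span
    exact h
  -- countability of the index set
  haveI hcw : Countable ↥w := by
    rw [← Set.countable_univ_iff]
    have huniv : (Set.univ : Set ↥w) = ⋃ j : ℕ, {i : ↥w | (v i : ∀ _ : ℕ, ℂ) j ≠ 0} := by
      ext i
      simp only [Set.mem_univ, true_iff, Set.mem_iUnion, Set.mem_setOf_eq]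
      by_contra hcontra
      push_neg at hcontra
      have hvi0 : v i = 0 := by
        apply lp.ext
        funext j
        simpa using hcontra j
      have := hv.1 i
      rw [hvi0] at this
      simp at this
    rw [huniv]
    apply Set.countable_iUnion
    intro j
    have hsum := hv.inner_products_summable (lp.single 2 j (1:ℂ))
    apply Set.Countable.mono _ hsum.countable_support
    intro i hi
    simp only [Function.mem_support]
    intro hzero
    apply hi
    have hinner : (inner ℂ (v i) (lp.single 2 j (1:ℂ)) : ℂ) =
        inner ℂ ((v i : ∀ _ : ℕ, ℂ) j) (1:ℂ) := lp.inner_single_right j (1:ℂ) (v i)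
    rw [hinner] at hzero
    have : ((starRingEnd ℂ) ((v i : ∀ _ : ℕ, ℂ) j) * 1) = 0 := by
      rw [mul_comm, ← RCLike.inner_apply]
      simpa using hzero
    simpa using this
  -- the index set is infinite
  haveI hiw : Infinite ↥w := by
    apply Set.infinite_coe_iff.mpr
    by_contra hfin
    rw [Set.not_infinite] at hfin
    haveI := hfin.to_subtype
    have hfr : (Set.range fun i => b i).Finite := Set.finite_range _
    haveI hfd1 : FiniteDimensional ℂ (Submodule.span ℂ (Set.range fun i => b i)) :=
      FiniteDimensional.span_of_finite ℂ hfr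
    have hclosed := Submodule.closed_of_finiteDimensional
      (Submodule.span ℂ (Set.range fun i => b i))
    have heq : Submodule.span ℂ (Set.range fun i => b i) = ⊤ := by
      rw [← hclosed.submodule_topologicalClosure_eq]
      exact hdense
    apply hnfd
    rw [heq] at hfd1
    exact (Submodule.topEquiv : (⊤ : Submodule ℂ ↥M) ≃ₗ[ℂ] ↥M).finiteDimensional
  -- reindex the basis by ℕ
  haveI : Denumerable ↥w := (nonempty_denumerable_iff.mpr ⟨hcw, hiw⟩).some
  set e : ℕ ≃ ↥w := (Denumerable.eqv ↥w).symm with he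
  have honb : Orthonormal ℂ (⇑b ∘ ⇑e) := b.orthonormal.comp ⇑e e.injective
  have hsp : ⊤ ≤ (Submodule.span ℂ (Set.range (⇑b ∘ ⇑e))).topologicalClosure := by
    rw [Set.range_comp, e.surjective.range_eq, Set.image_univ]
    exact hdense.ge
  exact ⟨(HilbertBasis.mk honb hsp).repr⟩

end Aux

/-- **Corollary 1.6 of the paper.** Let `g₀ ∈ ℓ₂` with `‖g₀‖ = 1` and
`ε ∈ (0,1)`.  If there is a bounded operator `T` on `ℓ₂` satisfying
(P3): for every non-zero `x` the distance of the orbit of `x` to `g₀` is `< ε`,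
then there is a bounded operator `T'` on `ℓ₂` with no non-trivial invariant closed subspace,
i.e. every non-zero vector is cyclic for `T'`. -/
theorem exists_operator_without_invariant_subspace_of_P3
    (g₀ : ellTwo) (hg₀ : ‖g₀‖ = 1) (ε : ℝ) (hε0 : 0 < ε) (hε1 : ε < 1)
    (T : ellTwo →L[ℂ] ellTwo)
    -- (P3): the distance of the orbit of any non-zero vector to `g₀` is `< ε`:
    (hP3 : ∀ x : ellTwo, x ≠ 0 →
      Metric.infDist g₀ (Set.range fun n : ℕ => (T ^ n) x) < ε) :
    ∃ T' : ellTwo →L[ℂ] ellTwo,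
      ∀ x : ellTwo, x ≠ 0 →
        Dense ((Submodule.span ℂ (Set.range fun n : ℕ => (T' ^ n) x) :
          Submodule ℂ ellTwo) : Set ellTwo) := by
  classical
  obtain ⟨M, hMgood, hMmin⟩ := exists_minimal_good hg₀ hε0 hε1 hP3
  obtain ⟨hMb, hMc, hMi⟩ := hMgood
  haveI : CompleteSpace ↥M := hMc.completeSpace_coe
  have hnfd : ¬ FiniteDimensional ℂ ↥M :=
    not_finiteDimensional_good hg₀ hε0 hε1 hP3 ⟨hMb, hMc, hMi⟩
  obtain ⟨U⟩ := iso_ellTwo M hnfd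
  -- the restriction of `T` to `M`
  let T₀l : ↥M →ₗ[ℂ] ↥M :=
    { toFun := fun z => ⟨T ↑z, hMi ↑z z.2⟩
      map_add' := fun a b => Subtype.ext (by simp)
      map_smul' := fun c a => Subtype.ext (by simp) }
  let T₀ : ↥M →L[ℂ] ↥M :=
    ⟨T₀l, (T.continuous.comp continuous_subtype_val).subtype_mk _⟩
  have hT₀app : ∀ z : ↥M, ((T₀ z : ↥M) : ellTwo) = T (z : ellTwo) := fun z => rfl
  have hT₀coe : ∀ (n : ℕ) (z : ↥M), (((T₀ ^ n) z : ↥M) : ellTwo) = (T ^ n) (z : ellTwo) := by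
    intro n
    induction n with
    | zero => intro z; simp
    | succ n ih =>
        intro z
        rw [clm_pow_apply_succ, clm_pow_apply_succ, ← ih z, hT₀app]
  let Ucl : ↥M →L[ℂ] ellTwo := U.toLinearIsometry.toContinuousLinearMap
  let Vcl : ellTwo →L[ℂ] ↥M := U.symm.toLinearIsometry.toContinuousLinearMap
  refine ⟨Ucl.comp (T₀.comp Vcl), ?_⟩
  intro x hx
  set T' : ellTwo →L[ℂ] ellTwo := Ucl.comp (T₀.comp Vcl) with hT'def
  set y : ↥M := U.symm x with hy
  have hy0 : y ≠ 0 := by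
    rw [hy]
    intro h
    apply hx
    have h2 := congrArg U h
    simpa using h2
  have hT'app : ∀ z : ellTwo, T' z = U (T₀ (U.symm z)) := fun z => rfl
  have hT'pow : ∀ (n : ℕ) (z : ellTwo), (T' ^ n) z = U ((T₀ ^ n) (U.symm z)) := by
    intro n
    induction n with
    | zero => intro z; simp
    | succ n ih =>
        intro z
        rw [clm_pow_apply_succ, clm_pow_apply_succ, ih, hT'app]
        congr 1
        rw [U.symm_apply_apply]
  -- the closed invariant subspace generated by `y`
  set S : Set ellTwo := Set.range fun n : ℕ => (T ^ n) (y : ellTwo) with hS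
  set N : Submodule ℂ ellTwo := (Submodule.span ℂ S).topologicalClosure with hN
  have hyM : (y : ellTwo) ∈ M := y.2
  have hSM : S ⊆ (M : Set ellTwo) := by
    rintro _ ⟨n, rfl⟩
    exact pow_apply_mem hMi n _ hyM
  have hNM : N ≤ M := Submodule.topologicalClosure_minimal _ (Submodule.span_le.mpr hSM) hMc
  have hyS : (y : ellTwo) ∈ S := ⟨0, by simp⟩
  have hNgood : IsGood T N := by
    refine ⟨?_, Submodule.isClosed_topologicalClosure _, ?_⟩
    · apply (Submodule.ne_bot_iff _).mpr
      refine ⟨(y : ellTwo),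
        Submodule.le_topologicalClosure _ (Submodule.subset_span hyS), ?_⟩
      intro h
      exact hy0 (Submodule.coe_eq_zero.mp h)
    · intro z hz
      have hzc : z ∈ closure ((Submodule.span ℂ S : Submodule ℂ ellTwo) : Set ellTwo) := by
        have hcoeN : (N : Set ellTwo)
            = closure ((Submodule.span ℂ S : Submodule ℂ ellTwo) : Set ellTwo) :=
          Submodule.topologicalClosure_coe _
        rw [← hcoeN]
        exact hz
      have hmaps : Set.MapsTo T ((Submodule.span ℂ S : Submodule ℂ ellTwo) : Set ellTwo)
          ((Submodule.span ℂ S : Submodule ℂ ellTwo) : Set ellTwo) := by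
        intro a ha
        have h1 : T a ∈ Submodule.map (T : ellTwo →ₗ[ℂ] ellTwo) (Submodule.span ℂ S) :=
          Submodule.mem_map_of_mem ha
        rw [Submodule.map_span] at h1
        have h2 : (T : ellTwo →ₗ[ℂ] ellTwo) '' S ⊆ S := by
          rintro _ ⟨_, ⟨n, rfl⟩, rfl⟩
          refine ⟨n + 1, ?_⟩
          show (T ^ (n + 1)) (y : ellTwo) = (T : ellTwo →ₗ[ℂ] ellTwo) ((T ^ n) (y : ellTwo))
          rw [clm_pow_apply_succ]
          rfl
        exact Submodule.span_mono h2 h1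
      have hTz : T z ∈ closure ((Submodule.span ℂ S : Submodule ℂ ellTwo) : Set ellTwo) :=
        map_mem_closure T.continuous hzc hmaps
      have hcoeN : (N : Set ellTwo)
          = closure ((Submodule.span ℂ S : Submodule ℂ ellTwo) : Set ellTwo) :=
        Submodule.topologicalClosure_coe _
      show T z ∈ (N : Set ellTwo)
      rw [hcoeN]
      exact hTz
  have hNeq : N = M := hMmin N hNgood hNM
  -- density of the span of the `T₀`-orbit of `y` inside `M`
  have hvalA : Subtype.val '' (Set.range fun n : ℕ => (T₀ ^ n) y) = S := by
    rw [← Set.range_comp]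
    exact congrArg Set.range (funext fun n => hT₀coe n y)
  have hdenseA : Dense ((Submodule.span ℂ (Set.range fun n : ℕ => (T₀ ^ n) y) :
      Submodule ℂ ↥M) : Set ↥M) := by
    intro z
    rw [closure_subtype]
    have himg : Subtype.val '' ((Submodule.span ℂ (Set.range fun n : ℕ => (T₀ ^ n) y) :
        Submodule ℂ ↥M) : Set ↥M) = ((Submodule.span ℂ S : Submodule ℂ ellTwo) : Set ellTwo) := by
      rw [← Submodule.coe_subtype, ← Submodule.map_coe, Submodule.map_span,
        Submodule.coe_subtype, hvalA]
    rw [himg]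
    have hcoeN : (N : Set ellTwo)
        = closure ((Submodule.span ℂ S : Submodule ℂ ellTwo) : Set ellTwo) :=
      Submodule.topologicalClosure_coe _
    rw [← hcoeN, hNeq]
    exact z.2
  -- transfer the density through the isometry `U`
  have hrange : (Set.range fun n : ℕ => (T' ^ n) x)
      = ⇑U '' (Set.range fun n : ℕ => (T₀ ^ n) y) := by
    rw [← Set.range_comp]
    exact congrArg Set.range (funext fun n => hT'pow n x)
  have hgoalset : ((Submodule.span ℂ (Set.range fun n : ℕ => (T' ^ n) x) :
        Submodule ℂ ellTwo) : Set ellTwo)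
      = ⇑U '' ((Submodule.span ℂ (Set.range fun n : ℕ => (T₀ ^ n) y) :
        Submodule ℂ ↥M) : Set ↥M) := by
    rw [hrange, ← LinearIsometryEquiv.coe_toLinearEquiv U, Submodule.span_image_linearEquiv,
      Submodule.map_coe]
    rfl
  rw [dense_iff_closure_eq, hgoalset]
  have himcl : ⇑U '' closure ((Submodule.span ℂ (Set.range fun n : ℕ => (T₀ ^ n) y) :
        Submodule ℂ ↥M) : Set ↥M)
      = closure (⇑U '' ((Submodule.span ℂ (Set.range fun n : ℕ => (T₀ ^ n) y) :
        Submodule ℂ ↥M) : Set ↥M)) := U.toHomeomorph.image_closure _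
  rw [← himcl, hdenseA.closure_eq, Set.image_univ]
  exact U.surjective.range_eq
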